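/- In the same 3-voter 3-alternative plurality setting, with voting cost term β = 1 so that a voter voting for alternative a receives total utility u(a) + E[u(winner(a, b, c))], the set of u in the 2-simplex that are manipulable has relative area 1/9. -/

import Mathlib

open MeasureTheory

/-- Expected utility of the plurality winner (uniform random tiebreak) with 3 voters:
our voter votes `a`, the opponents vote `b` and `c`. -/
noncomputable def pluralityEU (u : Fin 3 → ℝ) (a b c : Fin 3) : ℝ :=
  if a = b then u a else if a = c then u a else if b = c then u b
  else (u a + u b + u c) / 3

/-- Total utility with voting cost coefficient β = 1: the voter voting `a` receives
`u a` directly plus the expected utility of the plurality winner. -/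
noncomputable def totalEU (u : Fin 3 → ℝ) (a b c : Fin 3) : ℝ :=
  u a + pluralityEU u a b c

/-- `a` is a best response (β = 1) against opponent votes `(b, c)`. -/
def BestResponse1 (u : Fin 3 → ℝ) (b c a : Fin 3) : Prop :=
  ∀ a', totalEU u a' b c ≤ totalEU u a b c

/-- `u` is manipulable: there are two opponent profiles with disjoint best-response sets. -/
def Manipulable1 (u : Fin 3 → ℝ) : Prop :=
  ∃ b c b' c', ∀ a : Fin 3, ¬ (BestResponse1 u b c a ∧ BestResponse1 u b' c' a)

/-- Parametrization of the 2-simplex `{u ≥ 0, u₁ + u₂ + u₃ = 1}` by `(u₁, u₂) ∈ ℝ²`. -/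
noncomputable def simplexU (p : ℝ × ℝ) : Fin 3 → ℝ := ![p.1, p.2, 1 - p.1 - p.2]

/-- The parameter region corresponding to the 2-simplex. -/
def simplexRegion : Set (ℝ × ℝ) := {p | 0 ≤ p.1 ∧ 0 ≤ p.2 ∧ p.1 + p.2 ≤ 1}

/-! ### Auxiliary material -/

open Set

section MeasureHelpers

lemma graph_null (f : ℝ → ℝ) (hf : Measurable f) :
    volume {p : ℝ × ℝ | p.2 = f p.1} = 0 := by
  have hm : MeasurableSet {p : ℝ × ℝ | p.2 = f p.1} :=
    measurableSet_eq_fun measurable_snd (hf.comp measurable_fst)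
  rw [Measure.volume_eq_prod, Measure.prod_apply hm]
  have h : ∀ x : ℝ, (Prod.mk x ⁻¹' {p : ℝ × ℝ | p.2 = f p.1}) = {f x} := by
    intro x; ext y; simp
  simp [h]

lemma vline_null (c : ℝ) : volume {p : ℝ × ℝ | p.1 = c} = 0 := by
  have h : {p : ℝ × ℝ | p.1 = c} = ({c} : Set ℝ) ×ˢ (univ : Set ℝ) := by
    ext ⟨x, y⟩; simp [eq_comm]
  rw [h, Measure.volume_eq_prod, Measure.prod_prod]
  simp

lemma int_lin (a b c d : ℝ) : ∫ x in a..b, (c*x+d) = c*(b^2-a^2)/2 + d*(b-a) := by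
  rw [intervalIntegral.integral_add ((Continuous.intervalIntegrable (by continuity) _ _))
    (intervalIntegrable_const), intervalIntegral.integral_const_mul, integral_id,
    intervalIntegral.integral_const, smul_eq_mul]
  ring

lemma vol_lin (a b c d e f : ℝ) (hab : a ≤ b)
    (h : ∀ x ∈ Set.Ioo a b, c*x + d ≤ e*x + f) :
    volume {p : ℝ × ℝ | p.1 ∈ Set.Ioo a b ∧ p.2 ∈ Set.Ioo (c*p.1+d) (e*p.1+f)} =
      ENNReal.ofReal ((e-c)*(b^2-a^2)/2 + (f-d)*(b-a)) := by
  have h1 : IntegrableOn (fun x : ℝ => c*x+d) (Set.Ioo a b) :=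
    (Continuous.integrableOn_Icc (by continuity)).mono_set Ioo_subset_Icc_self
  have h2 : IntegrableOn (fun x : ℝ => e*x+f) (Set.Ioo a b) :=
    (Continuous.integrableOn_Icc (by continuity)).mono_set Ioo_subset_Icc_self
  have hset : {p : ℝ × ℝ | p.1 ∈ Set.Ioo a b ∧ p.2 ∈ Set.Ioo (c*p.1+d) (e*p.1+f)} =
      regionBetween (fun x => c*x+d) (fun x => e*x+f) (Set.Ioo a b) := rfl
  rw [hset, Measure.volume_eq_prod,
    volume_regionBetween_eq_integral h1 h2 measurableSet_Ioo h]
  congr 1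
  rw [show ((fun x => e*x+f) - (fun x => c*x+d)) = fun x : ℝ => (e-c)*x + (f-d) by
        funext x; simp; ring]
  rw [← MeasureTheory.integral_Ioc_eq_integral_Ioo, ← intervalIntegral.integral_of_le hab,
    int_lin]

lemma region_measurable (a b c d e f : ℝ) :
    MeasurableSet {p : ℝ × ℝ | p.1 ∈ Set.Ioo a b ∧ p.2 ∈ Set.Ioo (c*p.1+d) (e*p.1+f)} := by
  rw [show {p : ℝ × ℝ | p.1 ∈ Set.Ioo a b ∧ p.2 ∈ Set.Ioo (c*p.1+d) (e*p.1+f)} =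
      regionBetween (fun x => c*x+d) (fun x => e*x+f) (Set.Ioo a b) from rfl]
  exact measurableSet_regionBetween (by fun_prop) (by fun_prop) measurableSet_Ioo

lemma swap_mp : MeasurePreserving (Prod.swap : ℝ × ℝ → ℝ × ℝ) volume volume := by
  rw [Measure.volume_eq_prod]
  exact Measure.measurePreserving_swap

lemma vol_lin' (a b c d e f : ℝ) (hab : a ≤ b)
    (h : ∀ x ∈ Set.Ioo a b, c*x + d ≤ e*x + f) :
    volume {p : ℝ × ℝ | p.2 ∈ Set.Ioo a b ∧ p.1 ∈ Set.Ioo (c*p.2+d) (e*p.2+f)} =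
      ENNReal.ofReal ((e-c)*(b^2-a^2)/2 + (f-d)*(b-a)) := by
  have hpre : {p : ℝ × ℝ | p.2 ∈ Set.Ioo a b ∧ p.1 ∈ Set.Ioo (c*p.2+d) (e*p.2+f)} =
      Prod.swap ⁻¹' {p : ℝ × ℝ | p.1 ∈ Set.Ioo a b ∧ p.2 ∈ Set.Ioo (c*p.1+d) (e*p.1+f)} := rfl
  rw [hpre, swap_mp.measure_preimage (region_measurable a b c d e f).nullMeasurableSet,
    vol_lin a b c d e f hab h]

lemma region_measurable' (a b c d e f : ℝ) :
    MeasurableSet {p : ℝ × ℝ | p.2 ∈ Set.Ioo a b ∧ p.1 ∈ Set.Ioo (c*p.2+d) (e*p.2+f)} := by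
  rw [show {p : ℝ × ℝ | p.2 ∈ Set.Ioo a b ∧ p.1 ∈ Set.Ioo (c*p.2+d) (e*p.2+f)} =
      Prod.swap ⁻¹' {p : ℝ × ℝ | p.1 ∈ Set.Ioo a b ∧ p.2 ∈ Set.Ioo (c*p.1+d) (e*p.1+f)} from rfl]
  exact (region_measurable a b c d e f).preimage measurable_swap

end MeasureHelpers

section VotingHelpers

lemma manip_of (u : Fin 3 → ℝ) (i j k : Fin 3) (hij : i ≠ j) (hik : i ≠ k) (hjk : j ≠ k)
    (h1 : u j < u i) (h2 : u k < u i) (h3 : u i + (u i + u j + u k)/3 < 2 * u j) :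
    Manipulable1 u := by
  refine ⟨i, i, j, k, ?_⟩
  rintro a ⟨hA, hB⟩
  have hp : pluralityEU u a i i = u i := by
    by_cases h : a = i
    · subst h; simp [pluralityEU]
    · simp [pluralityEU, h]
  have hAi := hA i
  have hii : pluralityEU u i i i = u i := by simp [pluralityEU]
  rw [totalEU, totalEU, hp, hii] at hAi
  have haj : a ≠ j := by rintro rfl; linarith
  have hak : a ≠ k := by rintro rfl; linarith
  have hai : a = i := by
    simp only [Ne, Fin.ext_iff] at *
    omega
  subst hai
  have hBj := hB j
  have e1 : pluralityEU u j j k = u j := by simp [pluralityEU]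
  have e2 : pluralityEU u a j k = (u a + u j + u k)/3 := by
    simp [pluralityEU, hij, hik, hjk]
  rw [totalEU, totalEU, e1, e2] at hBj
  linarith

lemma stable (u : Fin 3 → ℝ) (hs : u 0 + u 1 + u 2 = 1) (i : Fin 3)
    (hmax : ∀ j, u j ≤ u i) (hj : ∀ j, j ≠ i → 2 * u j ≤ u i + 1/3) :
    ¬ Manipulable1 u := by
  have key : ∀ b c : Fin 3, BestResponse1 u b c i := by
    have m0 := hmax 0; have m1 := hmax 1; have m2 := hmax 2
    intro b c a
    have hi : i = 0 ∨ i = 1 ∨ i = 2 := by omega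
    rcases hi with rfl | rfl | rfl
    · have k1 := hj 1 (by decide); have k2 := hj 2 (by decide)
      fin_cases b <;> fin_cases c <;> fin_cases a <;>
        simp [totalEU, pluralityEU] <;> linarith
    · have k1 := hj 0 (by decide); have k2 := hj 2 (by decide)
      fin_cases b <;> fin_cases c <;> fin_cases a <;>
        simp [totalEU, pluralityEU] <;> linarith
    · have k1 := hj 0 (by decide); have k2 := hj 1 (by decide)
      fin_cases b <;> fin_cases c <;> fin_cases a <;>
        simp [totalEU, pluralityEU] <;> linarith
  rintro ⟨b, c, b', c', H⟩
  exact H i ⟨key b c, key b' c'⟩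

lemma su0 (p : ℝ × ℝ) : simplexU p 0 = p.1 := rfl
lemma su1 (p : ℝ × ℝ) : simplexU p 1 = p.2 := rfl
lemma su2 (p : ℝ × ℝ) : simplexU p 2 = 1 - p.1 - p.2 := rfl

end VotingHelpers

/-! ### The eight open pieces of the manipulable region -/

def pieceP1 : Set (ℝ × ℝ) :=
  {p | p.2 ∈ Set.Ioo (1/3 : ℝ) (4/9) ∧ p.1 ∈ Set.Ioo (1*p.2+0) (2*p.2+(-1/3))}
def pieceP2 : Set (ℝ × ℝ) :=
  {p | p.2 ∈ Set.Ioo (4/9 : ℝ) (1/2) ∧ p.1 ∈ Set.Ioo (1*p.2+0) ((-1)*p.2+1)}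
def pieceQ1 : Set (ℝ × ℝ) :=
  {p | p.1 ∈ Set.Ioo (1/3 : ℝ) (4/9) ∧ p.2 ∈ Set.Ioo (1*p.1+0) (2*p.1+(-1/3))}
def pieceQ2 : Set (ℝ × ℝ) :=
  {p | p.1 ∈ Set.Ioo (4/9 : ℝ) (1/2) ∧ p.2 ∈ Set.Ioo (1*p.1+0) ((-1)*p.1+1)}
def pieceR3 : Set (ℝ × ℝ) :=
  {p | p.2 ∈ Set.Ioo (0 : ℝ) (1/3) ∧ p.1 ∈ Set.Ioo ((-1/2)*p.2+1/2) ((-2/3)*p.2+5/9)}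
def pieceR4 : Set (ℝ × ℝ) :=
  {p | p.2 ∈ Set.Ioo (0 : ℝ) (1/3) ∧ p.1 ∈ Set.Ioo ((-1/3)*p.2+4/9) ((-1/2)*p.2+1/2)}
def pieceR5 : Set (ℝ × ℝ) :=
  {p | p.1 ∈ Set.Ioo (0 : ℝ) (1/3) ∧ p.2 ∈ Set.Ioo ((-1/2)*p.1+1/2) ((-2/3)*p.1+5/9)}
def pieceR6 : Set (ℝ × ℝ) :=
  {p | p.1 ∈ Set.Ioo (0 : ℝ) (1/3) ∧ p.2 ∈ Set.Ioo ((-1/3)*p.1+4/9) ((-1/2)*p.1+1/2)}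

/-! ### The six closed triangles -/

def closedT1 : Set (ℝ × ℝ) := {p | p.2 ≤ p.1 ∧ p.1 + 1/3 ≤ 2*p.2 ∧ p.1 + p.2 ≤ 1}
def closedT2 : Set (ℝ × ℝ) := {p | p.1 ≤ p.2 ∧ p.2 + 1/3 ≤ 2*p.1 ∧ p.1 + p.2 ≤ 1}
def closedT3 : Set (ℝ × ℝ) :=
  {p | 1 - p.1 - p.2 ≤ p.1 ∧ p.1 + 1/3 ≤ 2*(1 - p.1 - p.2) ∧ 0 ≤ p.2}
def closedT4 : Set (ℝ × ℝ) :=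
  {p | p.1 ≤ 1 - p.1 - p.2 ∧ (1 - p.1 - p.2) + 1/3 ≤ 2*p.1 ∧ 0 ≤ p.2}
def closedT5 : Set (ℝ × ℝ) :=
  {p | 1 - p.1 - p.2 ≤ p.2 ∧ p.2 + 1/3 ≤ 2*(1 - p.1 - p.2) ∧ 0 ≤ p.1}
def closedT6 : Set (ℝ × ℝ) :=
  {p | p.2 ≤ 1 - p.1 - p.2 ∧ (1 - p.1 - p.2) + 1/3 ≤ 2*p.2 ∧ 0 ≤ p.1}

/-! ### Volumes of the pieces -/

lemma vol_P1 : volume pieceP1 = ENNReal.ofReal (1/162) := by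
  unfold pieceP1
  rw [    vol_lin' (1/3) (4/9) 1 0 2 (-1/3) (by norm_num) (fun x hx => by
      obtain ⟨a1, a2⟩ := hx; linarith)]
  congr 1; norm_num

lemma vol_P2 : volume pieceP2 = ENNReal.ofReal (1/324) := by
  unfold pieceP2
  rw [    vol_lin' (4/9) (1/2) 1 0 (-1) 1 (by norm_num) (fun x hx => by
      obtain ⟨a1, a2⟩ := hx; linarith)]
  congr 1; norm_num

lemma vol_Q1 : volume pieceQ1 = ENNReal.ofReal (1/162) := by
  unfold pieceQ1
  rw [    vol_lin (1/3) (4/9) 1 0 2 (-1/3) (by norm_num) (fun x hx => by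
      obtain ⟨a1, a2⟩ := hx; linarith)]
  congr 1; norm_num

lemma vol_Q2 : volume pieceQ2 = ENNReal.ofReal (1/324) := by
  unfold pieceQ2
  rw [    vol_lin (4/9) (1/2) 1 0 (-1) 1 (by norm_num) (fun x hx => by
      obtain ⟨a1, a2⟩ := hx; linarith)]
  congr 1; norm_num

lemma vol_R3 : volume pieceR3 = ENNReal.ofReal (1/108) := by
  unfold pieceR3
  rw [    vol_lin' 0 (1/3) (-1/2) (1/2) (-2/3) (5/9) (by norm_num) (fun x hx => by
      obtain ⟨a1, a2⟩ := hx; linarith)]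
  congr 1; norm_num

lemma vol_R4 : volume pieceR4 = ENNReal.ofReal (1/108) := by
  unfold pieceR4
  rw [    vol_lin' 0 (1/3) (-1/3) (4/9) (-1/2) (1/2) (by norm_num) (fun x hx => by
      obtain ⟨a1, a2⟩ := hx; linarith)]
  congr 1; norm_num

lemma vol_R5 : volume pieceR5 = ENNReal.ofReal (1/108) := by
  unfold pieceR5
  rw [    vol_lin 0 (1/3) (-1/2) (1/2) (-2/3) (5/9) (by norm_num) (fun x hx => by
      obtain ⟨a1, a2⟩ := hx; linarith)]
  congr 1; norm_num

lemma vol_R6 : volume pieceR6 = ENNReal.ofReal (1/108) := by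
  unfold pieceR6
  rw [    vol_lin 0 (1/3) (-1/3) (4/9) (-1/2) (1/2) (by norm_num) (fun x hx => by
      obtain ⟨a1, a2⟩ := hx; linarith)]
  congr 1; norm_num

lemma meas_P1 : MeasurableSet pieceP1 := region_measurable' _ _ _ _ _ _
lemma meas_P2 : MeasurableSet pieceP2 := region_measurable' _ _ _ _ _ _
lemma meas_Q1 : MeasurableSet pieceQ1 := region_measurable _ _ _ _ _ _
lemma meas_Q2 : MeasurableSet pieceQ2 := region_measurable _ _ _ _ _ _
lemma meas_R3 : MeasurableSet pieceR3 := region_measurable' _ _ _ _ _ _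
lemma meas_R4 : MeasurableSet pieceR4 := region_measurable' _ _ _ _ _ _
lemma meas_R5 : MeasurableSet pieceR5 := region_measurable _ _ _ _ _ _
lemma meas_R6 : MeasurableSet pieceR6 := region_measurable _ _ _ _ _ _

/-! ### The pieces are disjoint -/

section Disjointness

open Set

lemma pdisj :
    Disjoint pieceP1 pieceP2 ∧ Disjoint pieceP1 pieceQ1 ∧ Disjoint pieceP1 pieceQ2 ∧
    Disjoint pieceP1 pieceR3 ∧ Disjoint pieceP1 pieceR4 ∧ Disjoint pieceP1 pieceR5 ∧
    Disjoint pieceP1 pieceR6 ∧ Disjoint pieceP2 pieceQ1 ∧ Disjoint pieceP2 pieceQ2 ∧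
    Disjoint pieceP2 pieceR3 ∧ Disjoint pieceP2 pieceR4 ∧ Disjoint pieceP2 pieceR5 ∧
    Disjoint pieceP2 pieceR6 ∧ Disjoint pieceQ1 pieceQ2 ∧ Disjoint pieceQ1 pieceR3 ∧
    Disjoint pieceQ1 pieceR4 ∧ Disjoint pieceQ1 pieceR5 ∧ Disjoint pieceQ1 pieceR6 ∧
    Disjoint pieceQ2 pieceR3 ∧ Disjoint pieceQ2 pieceR4 ∧ Disjoint pieceQ2 pieceR5 ∧
    Disjoint pieceQ2 pieceR6 ∧ Disjoint pieceR3 pieceR4 ∧ Disjoint pieceR3 pieceR5 ∧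
    Disjoint pieceR3 pieceR6 ∧ Disjoint pieceR4 pieceR5 ∧ Disjoint pieceR4 pieceR6 ∧
    Disjoint pieceR5 pieceR6 := by
  refine ⟨?_, ?_, ?_, ?_, ?_, ?_, ?_, ?_, ?_, ?_, ?_, ?_, ?_, ?_, ?_, ?_, ?_, ?_, ?_, ?_,
    ?_, ?_, ?_, ?_, ?_, ?_, ?_, ?_⟩ <;>
  · rw [Set.disjoint_left]
    rintro ⟨x, y⟩ ⟨⟨a1, a2⟩, ⟨a3, a4⟩⟩ ⟨⟨b1, b2⟩, ⟨b3, b4⟩⟩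
    simp only at *
    linarith

end Disjointness

/-! ### Lower bound: the pieces are manipulable and inside the simplex -/

lemma pieces_manipulable :
    pieceP1 ∪ pieceP2 ∪ pieceQ1 ∪ pieceQ2 ∪ pieceR3 ∪ pieceR4 ∪ pieceR5 ∪ pieceR6 ⊆
      {p ∈ simplexRegion | Manipulable1 (simplexU p)} := by
  rintro ⟨x, y⟩ hp
  have e0 : simplexU (x, y) 0 = x := rfl
  have e1 : simplexU (x, y) 1 = y := rfl
  have e2 : simplexU (x, y) 2 = 1 - x - y := rfl
  rcases hp with (((((((h | h) | h) | h) | h) | h) | h) | h) <;>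
    obtain ⟨⟨a1, a2⟩, ⟨a3, a4⟩⟩ := h <;> simp only at a1 a2 a3 a4
  · exact ⟨⟨by linarith, by linarith, by linarith⟩,
      manip_of _ 0 1 2 (by decide) (by decide) (by decide)
        (by rw [e0, e1]; linarith) (by rw [e0, e2]; linarith)
        (by rw [e0, e1, e2]; linarith)⟩
  · exact ⟨⟨by linarith, by linarith, by linarith⟩,
      manip_of _ 0 1 2 (by decide) (by decide) (by decide)
        (by rw [e0, e1]; linarith) (by rw [e0, e2]; linarith)
        (by rw [e0, e1, e2]; linarith)⟩
  · exact ⟨⟨by linarith, by linarith, by linarith⟩,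
      manip_of _ 1 0 2 (by decide) (by decide) (by decide)
        (by rw [e0, e1]; linarith) (by rw [e1, e2]; linarith)
        (by rw [e0, e1, e2]; linarith)⟩
  · exact ⟨⟨by linarith, by linarith, by linarith⟩,
      manip_of _ 1 0 2 (by decide) (by decide) (by decide)
        (by rw [e0, e1]; linarith) (by rw [e1, e2]; linarith)
        (by rw [e0, e1, e2]; linarith)⟩
  · exact ⟨⟨by linarith, by linarith, by linarith⟩,
      manip_of _ 0 2 1 (by decide) (by decide) (by decide)
        (by rw [e0, e2]; linarith) (by rw [e0, e1]; linarith)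
        (by rw [e0, e1, e2]; linarith)⟩
  · exact ⟨⟨by linarith, by linarith, by linarith⟩,
      manip_of _ 2 0 1 (by decide) (by decide) (by decide)
        (by rw [e0, e2]; linarith) (by rw [e1, e2]; linarith)
        (by rw [e0, e1, e2]; linarith)⟩
  · exact ⟨⟨by linarith, by linarith, by linarith⟩,
      manip_of _ 1 2 0 (by decide) (by decide) (by decide)
        (by rw [e1, e2]; linarith) (by rw [e0, e1]; linarith)
        (by rw [e0, e1, e2]; linarith)⟩
  · exact ⟨⟨by linarith, by linarith, by linarith⟩,
      manip_of _ 2 1 0 (by decide) (by decide) (by decide)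
        (by rw [e1, e2]; linarith) (by rw [e0, e2]; linarith)
        (by rw [e0, e1, e2]; linarith)⟩

/-! ### Upper bound: manipulable points lie in the closed triangles -/

lemma manip_subset_closed :
    {p ∈ simplexRegion | Manipulable1 (simplexU p)} ⊆
      closedT1 ∪ closedT2 ∪ closedT3 ∪ closedT4 ∪ closedT5 ∪ closedT6 := by
  rintro ⟨x, y⟩ ⟨⟨hx, hy, hxy⟩, hman⟩
  by_contra hc
  simp only [Set.mem_union, not_or] at hc
  obtain ⟨⟨⟨⟨⟨h1, h2⟩, h3⟩, h4⟩, h5⟩, h6⟩ := hc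
  simp only [closedT1, closedT2, closedT3, closedT4, closedT5, closedT6,
    Set.mem_setOf_eq, not_and, not_le] at h1 h2 h3 h4 h5 h6
  have e0 : simplexU (x, y) 0 = x := rfl
  have e1 : simplexU (x, y) 1 = y := rfl
  have e2 : simplexU (x, y) 2 = 1 - x - y := rfl
  have hs : simplexU (x, y) 0 + simplexU (x, y) 1 + simplexU (x, y) 2 = 1 := by
    rw [e0, e1, e2]; ring
  refine absurd hman ?_
  rcases le_total y x with hyx | hyx
  · rcases le_total (1 - x - y) x with hzx | hzx
    · refine stable _ hs 0 ?_ ?_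
      · intro j
        have hj : j = 0 ∨ j = 1 ∨ j = 2 := by omega
        rcases hj with rfl | rfl | rfl <;> simp only [e0, e1, e2] <;> linarith
      · intro j hj0
        have hj : j = 1 ∨ j = 2 := by omega
        rcases hj with rfl | rfl
        · rw [e0, e1]
          by_contra hcon; push_neg at hcon
          have := h1 hyx (by linarith)
          linarith
        · rw [e0, e2]
          by_contra hcon; push_neg at hcon
          have := h3 hzx (by linarith)
          linarith
    · refine stable _ hs 2 ?_ ?_
      · intro j
        have hj : j = 0 ∨ j = 1 ∨ j = 2 := by omega
        rcases hj with rfl | rfl | rfl <;> simp only [e0, e1, e2] <;> linarith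
      · intro j hj0
        have hj : j = 0 ∨ j = 1 := by omega
        rcases hj with rfl | rfl
        · rw [e0, e2]
          by_contra hcon; push_neg at hcon
          have := h4 hzx (by linarith)
          linarith
        · rw [e1, e2]
          by_contra hcon; push_neg at hcon
          have := h6 (by linarith) (by linarith)
          linarith
  · rcases le_total (1 - x - y) y with hzy | hzy
    · refine stable _ hs 1 ?_ ?_
      · intro j
        have hj : j = 0 ∨ j = 1 ∨ j = 2 := by omega
        rcases hj with rfl | rfl | rfl <;> simp only [e0, e1, e2] <;> linarith
      · intro j hj0
        have hj : j = 0 ∨ j = 2 := by omega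
        rcases hj with rfl | rfl
        · rw [e0, e1]
          by_contra hcon; push_neg at hcon
          have := h2 hyx (by linarith)
          linarith
        · rw [e1, e2]
          by_contra hcon; push_neg at hcon
          have := h5 hzy (by linarith)
          linarith
    · refine stable _ hs 2 ?_ ?_
      · intro j
        have hj : j = 0 ∨ j = 1 ∨ j = 2 := by omega
        rcases hj with rfl | rfl | rfl <;> simp only [e0, e1, e2] <;> linarith
      · intro j hj0
        have hj : j = 0 ∨ j = 1 := by omega
        rcases hj with rfl | rfl
        · rw [e0, e2]
          by_contra hcon; push_neg at hcon
          have := h4 (by linarith) (by linarith)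
          linarith
        · rw [e1, e2]
          by_contra hcon; push_neg at hcon
          have := h6 hzy (by linarith)
          linarith

/-! ### Each closed triangle has volume at most that of its open pieces -/

lemma mem_piece {a b c d e f x y : ℝ} (h1 : a < x) (h2 : x < b) (h3 : c*x+d < y)
    (h4 : y < e*x+f) :
    (x, y) ∈ {p : ℝ × ℝ | p.1 ∈ Set.Ioo a b ∧ p.2 ∈ Set.Ioo (c*p.1+d) (e*p.1+f)} :=
  ⟨⟨h1, h2⟩, ⟨h3, h4⟩⟩

lemma mem_piece' {a b c d e f x y : ℝ} (h1 : a < y) (h2 : y < b) (h3 : c*y+d < x)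
    (h4 : x < e*y+f) :
    (x, y) ∈ {p : ℝ × ℝ | p.2 ∈ Set.Ioo a b ∧ p.1 ∈ Set.Ioo (c*p.2+d) (e*p.2+f)} :=
  ⟨⟨h1, h2⟩, ⟨h3, h4⟩⟩

lemma closedT1_subset :
    closedT1 ⊆ pieceP1 ∪ pieceP2 ∪ {p : ℝ × ℝ | p.2 = p.1} ∪
      {p : ℝ × ℝ | p.2 = (1/2)*p.1 + 1/6} ∪ {p : ℝ × ℝ | p.2 = -p.1 + 1} ∪
      {p : ℝ × ℝ | p.2 = 4/9} := by
  rintro ⟨x, y⟩ ⟨h1, h2, h3⟩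
  simp only at h1 h2 h3
  simp only [Set.mem_union, Set.mem_setOf_eq]
  rcases eq_or_lt_of_le h1 with he | h1
  · exact Or.inl (Or.inl (Or.inl (Or.inr he)))
  rcases eq_or_lt_of_le h2 with he | h2
  · exact Or.inl (Or.inl (Or.inr (by linarith)))
  rcases eq_or_lt_of_le h3 with he | h3
  · exact Or.inl (Or.inr (by linarith))
  rcases lt_trichotomy y (4/9) with hy | hy | hy
  · refine Or.inl (Or.inl (Or.inl (Or.inl (Or.inl ?_))))
    unfold pieceP1
    exact mem_piece' (by linarith) hy (by linarith) (by linarith)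
  · exact Or.inr hy
  · refine Or.inl (Or.inl (Or.inl (Or.inl (Or.inr ?_))))
    unfold pieceP2
    exact mem_piece' hy (by linarith) (by linarith) (by linarith)

lemma closedT2_subset :
    closedT2 ⊆ pieceQ1 ∪ pieceQ2 ∪ {p : ℝ × ℝ | p.2 = p.1} ∪
      {p : ℝ × ℝ | p.2 = 2*p.1 - 1/3} ∪ {p : ℝ × ℝ | p.2 = -p.1 + 1} ∪
      {p : ℝ × ℝ | p.1 = 4/9} := by
  rintro ⟨x, y⟩ ⟨h1, h2, h3⟩
  simp only at h1 h2 h3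
  simp only [Set.mem_union, Set.mem_setOf_eq]
  rcases eq_or_lt_of_le h1 with he | h1
  · exact Or.inl (Or.inl (Or.inl (Or.inr he.symm)))
  rcases eq_or_lt_of_le h2 with he | h2
  · exact Or.inl (Or.inl (Or.inr (by linarith)))
  rcases eq_or_lt_of_le h3 with he | h3
  · exact Or.inl (Or.inr (by linarith))
  rcases lt_trichotomy x (4/9) with hx | hx | hx
  · refine Or.inl (Or.inl (Or.inl (Or.inl (Or.inl ?_))))
    unfold pieceQ1
    exact mem_piece (by linarith) hx (by linarith) (by linarith)
  · exact Or.inr hx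
  · refine Or.inl (Or.inl (Or.inl (Or.inl (Or.inr ?_))))
    unfold pieceQ2
    exact mem_piece hx (by linarith) (by linarith) (by linarith)

lemma closedT3_subset :
    closedT3 ⊆ pieceR3 ∪ {p : ℝ × ℝ | p.2 = 0} ∪ {p : ℝ × ℝ | p.2 = -2*p.1 + 1} ∪
      {p : ℝ × ℝ | p.2 = (-3/2)*p.1 + 5/6} := by
  rintro ⟨x, y⟩ ⟨h1, h2, h3⟩
  simp only at h1 h2 h3
  simp only [Set.mem_union, Set.mem_setOf_eq]
  rcases eq_or_lt_of_le h1 with he | h1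
  · exact Or.inl (Or.inr (by linarith))
  rcases eq_or_lt_of_le h2 with he | h2
  · exact Or.inr (by linarith)
  rcases eq_or_lt_of_le h3 with he | h3
  · exact Or.inl (Or.inl (Or.inr he.symm))
  refine Or.inl (Or.inl (Or.inl ?_))
  unfold pieceR3
  exact mem_piece' h3 (by linarith) (by linarith) (by linarith)

lemma closedT4_subset :
    closedT4 ⊆ pieceR4 ∪ {p : ℝ × ℝ | p.2 = 0} ∪ {p : ℝ × ℝ | p.2 = -2*p.1 + 1} ∪
      {p : ℝ × ℝ | p.2 = -3*p.1 + 4/3} := by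
  rintro ⟨x, y⟩ ⟨h1, h2, h3⟩
  simp only at h1 h2 h3
  simp only [Set.mem_union, Set.mem_setOf_eq]
  rcases eq_or_lt_of_le h1 with he | h1
  · exact Or.inl (Or.inr (by linarith))
  rcases eq_or_lt_of_le h2 with he | h2
  · exact Or.inr (by linarith)
  rcases eq_or_lt_of_le h3 with he | h3
  · exact Or.inl (Or.inl (Or.inr he.symm))
  refine Or.inl (Or.inl (Or.inl ?_))
  unfold pieceR4
  exact mem_piece' h3 (by linarith) (by linarith) (by linarith)

lemma closedT5_subset :
    closedT5 ⊆ pieceR5 ∪ {p : ℝ × ℝ | p.1 = 0} ∪ {p : ℝ × ℝ | p.2 = (-1/2)*p.1 + 1/2} ∪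
      {p : ℝ × ℝ | p.2 = (-2/3)*p.1 + 5/9} := by
  rintro ⟨x, y⟩ ⟨h1, h2, h3⟩
  simp only at h1 h2 h3
  simp only [Set.mem_union, Set.mem_setOf_eq]
  rcases eq_or_lt_of_le h1 with he | h1
  · exact Or.inl (Or.inr (by linarith))
  rcases eq_or_lt_of_le h2 with he | h2
  · exact Or.inr (by linarith)
  rcases eq_or_lt_of_le h3 with he | h3
  · exact Or.inl (Or.inl (Or.inr he.symm))
  refine Or.inl (Or.inl (Or.inl ?_))
  unfold pieceR5
  exact mem_piece h3 (by linarith) (by linarith) (by linarith)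

lemma closedT6_subset :
    closedT6 ⊆ pieceR6 ∪ {p : ℝ × ℝ | p.1 = 0} ∪ {p : ℝ × ℝ | p.2 = (-1/2)*p.1 + 1/2} ∪
      {p : ℝ × ℝ | p.2 = (-1/3)*p.1 + 4/9} := by
  rintro ⟨x, y⟩ ⟨h1, h2, h3⟩
  simp only at h1 h2 h3
  simp only [Set.mem_union, Set.mem_setOf_eq]
  rcases eq_or_lt_of_le h1 with he | h1
  · exact Or.inl (Or.inr (by linarith))
  rcases eq_or_lt_of_le h2 with he | h2
  · exact Or.inr (by linarith)
  rcases eq_or_lt_of_le h3 with he | h3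
  · exact Or.inl (Or.inl (Or.inr he.symm))
  refine Or.inl (Or.inl (Or.inl ?_))
  unfold pieceR6
  exact mem_piece h3 (by linarith) (by linarith) (by linarith)

lemma vol_closedT1 : volume closedT1 ≤ ENNReal.ofReal (1/162) + ENNReal.ofReal (1/324) := by
  refine le_trans (measure_mono closedT1_subset) ?_
  refine le_trans (measure_union_le _ _) ?_
  rw [graph_null (fun _ => 4/9) (by fun_prop)]
  refine le_trans (add_le_add_left (measure_union_le _ _) 0) ?_
  rw [graph_null (fun x => -x + 1) (by fun_prop)]
  refine le_trans (add_le_add_left (add_le_add_left (measure_union_le _ _) 0) 0) ?_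
  rw [graph_null (fun x => (1/2)*x + 1/6) (by fun_prop)]
  refine le_trans (add_le_add_left (add_le_add_left (add_le_add_left
    (measure_union_le _ _) 0) 0) 0) ?_
  rw [graph_null (fun x => x) (by fun_prop)]
  refine le_trans (add_le_add_left (add_le_add_left (add_le_add_left (add_le_add_left
    (measure_union_le _ _) 0) 0) 0) 0) ?_
  rw [vol_P1, vol_P2]
  simp

lemma vol_closedT2 : volume closedT2 ≤ ENNReal.ofReal (1/162) + ENNReal.ofReal (1/324) := by
  refine le_trans (measure_mono closedT2_subset) ?_
  refine le_trans (measure_union_le _ _) ?_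
  rw [vline_null (4/9)]
  refine le_trans (add_le_add_left (measure_union_le _ _) 0) ?_
  rw [graph_null (fun x => -x + 1) (by fun_prop)]
  refine le_trans (add_le_add_left (add_le_add_left (measure_union_le _ _) 0) 0) ?_
  rw [graph_null (fun x => 2*x - 1/3) (by fun_prop)]
  refine le_trans (add_le_add_left (add_le_add_left (add_le_add_left
    (measure_union_le _ _) 0) 0) 0) ?_
  rw [graph_null (fun x => x) (by fun_prop)]
  refine le_trans (add_le_add_left (add_le_add_left (add_le_add_left (add_le_add_left
    (measure_union_le _ _) 0) 0) 0) 0) ?_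
  rw [vol_Q1, vol_Q2]
  simp

lemma vol_closed_tri (T S : Set (ℝ × ℝ)) (f1 : ℝ → ℝ) (c : ENNReal)
    (hsub : T ⊆ S ∪ {p : ℝ × ℝ | p.2 = 0} ∪ {p : ℝ × ℝ | p.2 = -2*p.1 + 1} ∪
      {p : ℝ × ℝ | p.2 = f1 p.1})
    (hf1 : Measurable f1) (hS : volume S = c) : volume T ≤ c := by
  refine le_trans (measure_mono hsub) ?_
  refine le_trans (measure_union_le _ _) ?_
  rw [graph_null f1 hf1]
  refine le_trans (add_le_add_left (measure_union_le _ _) 0) ?_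
  rw [graph_null (fun x => -2*x + 1) (by fun_prop)]
  refine le_trans (add_le_add_left (add_le_add_left (measure_union_le _ _) 0) 0) ?_
  rw [graph_null (fun _ => 0) (by fun_prop), hS]
  simp

lemma vol_closed_tri' (T S : Set (ℝ × ℝ)) (f1 : ℝ → ℝ) (c : ENNReal)
    (hsub : T ⊆ S ∪ {p : ℝ × ℝ | p.1 = 0} ∪ {p : ℝ × ℝ | p.2 = (-1/2)*p.1 + 1/2} ∪
      {p : ℝ × ℝ | p.2 = f1 p.1})
    (hf1 : Measurable f1) (hS : volume S = c) : volume T ≤ c := by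
  refine le_trans (measure_mono hsub) ?_
  refine le_trans (measure_union_le _ _) ?_
  rw [graph_null f1 hf1]
  refine le_trans (add_le_add_left (measure_union_le _ _) 0) ?_
  rw [graph_null (fun x => (-1/2)*x + 1/2) (by fun_prop)]
  refine le_trans (add_le_add_left (add_le_add_left (measure_union_le _ _) 0) 0) ?_
  rw [vline_null 0, hS]
  simp

lemma vol_closedT3 : volume closedT3 ≤ ENNReal.ofReal (1/108) :=
  vol_closed_tri _ _ (fun x => (-3/2)*x + 5/6) _ closedT3_subset (by fun_prop) vol_R3

lemma vol_closedT4 : volume closedT4 ≤ ENNReal.ofReal (1/108) :=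
  vol_closed_tri _ _ (fun x => -3*x + 4/3) _ closedT4_subset (by fun_prop) vol_R4

lemma vol_closedT5 : volume closedT5 ≤ ENNReal.ofReal (1/108) :=
  vol_closed_tri' _ _ (fun x => (-2/3)*x + 5/9) _ closedT5_subset (by fun_prop) vol_R5

lemma vol_closedT6 : volume closedT6 ≤ ENNReal.ofReal (1/108) :=
  vol_closed_tri' _ _ (fun x => (-1/3)*x + 4/9) _ closedT6_subset (by fun_prop) vol_R6

/-! ### Volume of the simplex region -/

lemma vol_simplexRegion : volume simplexRegion = ENNReal.ofReal (1/2) := by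
  have hlow : {p : ℝ × ℝ | p.1 ∈ Set.Ioo (0:ℝ) 1 ∧ p.2 ∈ Set.Ioo (0*p.1+0) ((-1)*p.1+1)} ⊆
      simplexRegion := by
    rintro ⟨x, y⟩ ⟨⟨a1, a2⟩, ⟨a3, a4⟩⟩
    simp only at a1 a2 a3 a4
    exact ⟨by linarith, by linarith, by linarith⟩
  have hup : simplexRegion ⊆
      {p : ℝ × ℝ | p.1 ∈ Set.Ioo (0:ℝ) 1 ∧ p.2 ∈ Set.Ioo (0*p.1+0) ((-1)*p.1+1)} ∪
      {p : ℝ × ℝ | p.1 = 0} ∪ {p : ℝ × ℝ | p.2 = 0} ∪ {p : ℝ × ℝ | p.2 = -p.1 + 1} := by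
    rintro ⟨x, y⟩ ⟨hx, hy, hxy⟩
    simp only at hx hy hxy
    rcases eq_or_lt_of_le hx with he | hx
    · exact Or.inl (Or.inl (Or.inr he.symm))
    rcases eq_or_lt_of_le hy with he | hy
    · exact Or.inl (Or.inr he.symm)
    rcases eq_or_lt_of_le hxy with he | hxy
    · exact Or.inr (by simp only [Set.mem_setOf_eq]; linarith)
    exact Or.inl (Or.inl (Or.inl ⟨⟨hx, by linarith⟩, ⟨by simp only; linarith,
      by simp only; linarith⟩⟩))
  have hv : volume {p : ℝ × ℝ | p.1 ∈ Set.Ioo (0:ℝ) 1 ∧ p.2 ∈ Set.Ioo (0*p.1+0) ((-1)*p.1+1)} =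
      ENNReal.ofReal (1/2) := by
    rw [vol_lin 0 1 0 0 (-1) 1 (by norm_num) (fun x hx => by
      obtain ⟨a1, a2⟩ := hx; linarith)]
    congr 1; norm_num
  refine le_antisymm ?_ ?_
  · refine le_trans (measure_mono hup) ?_
    refine le_trans (measure_union_le _ _) ?_
    rw [graph_null (fun x => -x + 1) (by fun_prop)]
    refine le_trans (add_le_add_left (measure_union_le _ _) 0) ?_
    rw [graph_null (fun _ => 0) (by fun_prop)]
    refine le_trans (add_le_add_left (add_le_add_left (measure_union_le _ _) 0) 0) ?_
    rw [vline_null 0, hv]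
    simp
  · rw [← hv]
    exact measure_mono hlow

/-! ### Putting it all together -/

/-- with β = 1, the manipulable utilities form only 1/9 of the simplex
(in relative Lebesgue area). -/
theorem manipulable_area_beta_one :
    volume {p ∈ simplexRegion | Manipulable1 (simplexU p)} =
      (1 / 9 : ENNReal) * volume simplexRegion := by
  obtain ⟨d1, d2, d3, d4, d5, d6, d7, d8, d9, d10, d11, d12, d13, d14, d15, d16, d17, d18,
    d19, d20, d21, d22, d23, d24, d25, d26, d27, d28⟩ := pdisj
  have hvol_pieces :
      volume (pieceP1 ∪ pieceP2 ∪ pieceQ1 ∪ pieceQ2 ∪ pieceR3 ∪ pieceR4 ∪ pieceR5 ∪ pieceR6) =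
      ENNReal.ofReal (1/162) + ENNReal.ofReal (1/324) + ENNReal.ofReal (1/162) +
        ENNReal.ofReal (1/324) + ENNReal.ofReal (1/108) + ENNReal.ofReal (1/108) +
        ENNReal.ofReal (1/108) + ENNReal.ofReal (1/108) := by
    rw [measure_union (by
        simp only [Set.disjoint_union_left]
        exact ⟨⟨⟨⟨⟨⟨d7, d13⟩, d18⟩, d22⟩, d25⟩, d27⟩, d28⟩) meas_R6,
      measure_union (by
        simp only [Set.disjoint_union_left]
        exact ⟨⟨⟨⟨⟨d6, d12⟩, d17⟩, d21⟩, d24⟩, d26⟩) meas_R5,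
      measure_union (by
        simp only [Set.disjoint_union_left]
        exact ⟨⟨⟨⟨d5, d11⟩, d16⟩, d20⟩, d23⟩) meas_R4,
      measure_union (by
        simp only [Set.disjoint_union_left]
        exact ⟨⟨⟨d4, d10⟩, d15⟩, d19⟩) meas_R3,
      measure_union (by
        simp only [Set.disjoint_union_left]
        exact ⟨⟨d3, d9⟩, d14⟩) meas_Q2,
      measure_union (by
        simp only [Set.disjoint_union_left]
        exact ⟨d2, d8⟩) meas_Q1,
      measure_union d1 meas_P2,
      vol_P1, vol_P2, vol_Q1, vol_Q2, vol_R3, vol_R4, vol_R5, vol_R6]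
  have hlb : ENNReal.ofReal (1/18) ≤ volume {p ∈ simplexRegion | Manipulable1 (simplexU p)} := by
    refine le_trans (le_of_eq ?_) (measure_mono pieces_manipulable)
    rw [hvol_pieces]
    repeat rw [← ENNReal.ofReal_add (by norm_num) (by norm_num)]
    congr 1
    norm_num
  have hub : volume {p ∈ simplexRegion | Manipulable1 (simplexU p)} ≤ ENNReal.ofReal (1/18) := by
    refine le_trans (measure_mono manip_subset_closed) ?_
    refine le_trans (measure_union_le _ _) ?_
    refine le_trans (add_le_add (le_trans (measure_union_le _ _) (add_le_add
      (le_trans (measure_union_le _ _) (add_le_add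
        (le_trans (measure_union_le _ _) (add_le_add
          (le_trans (measure_union_le _ _) (add_le_add vol_closedT1 vol_closedT2))
          vol_closedT3)) vol_closedT4)) vol_closedT5)) vol_closedT6) ?_
    repeat rw [← ENNReal.ofReal_add (by norm_num) (by norm_num)]
    exact ENNReal.ofReal_le_ofReal (by norm_num)
  have hV : volume {p ∈ simplexRegion | Manipulable1 (simplexU p)} = ENNReal.ofReal (1/18) :=
    le_antisymm hub hlb
  rw [hV, vol_simplexRegion]
  rw [show (1/9 : ENNReal) = ENNReal.ofReal (1/9) by
    rw [ENNReal.ofReal_div_of_pos (by norm_num)]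
    norm_num]
  rw [← ENNReal.ofReal_mul (by norm_num)]
  norm_num
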